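/- arXiv:1801.10401 — 2 statements merged into one kernel-verified Lean document; each statement's English description precedes it below -/
import Mathlib

section
/- Let p, q ≥ 2 and let S(p,q) be the DAG with vertices c, a_1, ..., a_p, b_1, ..., b_q (all distinct) and arcs (a_i, c) for 1 ≤ i ≤ p and (c, b_j) for 1 ≤ j ≤ q. Then the arc-deletion distance to a funnel of S(p,q) equals min(p,q) − 1. -/
variable {V : Type*} [Fintype V] [DecidableEq V]

/-- Arc adjacency of a digraph given by its finite arc set. -/
def ArcAdj (A : Finset (V × V)) : V → V → Prop := fun u v => (u, v) ∈ A

/-- A digraph is a DAG if it contains no directed cycle. -/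
def IsDAG (A : Finset (V × V)) : Prop := ∀ v : V, ¬ Relation.TransGen (ArcAdj A) v v

/-- Indegree of a vertex. -/
def inDeg (A : Finset (V × V)) (v : V) : ℕ := (A.filter fun e => e.2 = v).card

/-- Outdegree of a vertex. -/
def outDeg (A : Finset (V × V)) (v : V) : ℕ := (A.filter fun e => e.1 = v).card

/-- A source is a vertex of indegree 0. -/
def IsSource (A : Finset (V × V)) (v : V) : Prop := inDeg A v = 0

/-- A sink is a vertex of outdegree 0. -/
def IsSink (A : Finset (V × V)) (v : V) : Prop := outDeg A v = 0

/-- The arcs (consecutive pairs of vertices) of a path given as a list of vertices. -/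
def arcsOf (p : List V) : List (V × V) := p.zip p.tail

/-- A source-sink path: a directed path (with at least one arc) starting at a
source and ending at a sink. -/
def IsSourceSinkPath (A : Finset (V × V)) (p : List V) : Prop :=
  2 ≤ p.length ∧ List.Chain' (ArcAdj A) p ∧ p.Nodup ∧
  (∃ s, p.head? = some s ∧ IsSource A s) ∧
  (∃ t, p.getLast? = some t ∧ IsSink A t)

/-- An arc is private if exactly one source-sink path contains it. -/
def IsPrivate (A : Finset (V × V)) (e : V × V) : Prop :=
  ∃! p : List V, IsSourceSinkPath A p ∧ e ∈ arcsOf p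

/-- A funnel: every source-sink path contains at least one private arc. -/
def IsFunnel (A : Finset (V × V)) : Prop :=
  ∀ p : List V, IsSourceSinkPath A p → ∃ e ∈ arcsOf p, IsPrivate A e

/-- The arc-deletion distance to a funnel: the minimum number of arcs whose
deletion turns the digraph into a funnel. -/
noncomputable def funnelDist (A : Finset (V × V)) : ℕ :=
  sInf {k | ∃ B ⊆ A, B.card = k ∧ IsFunnel (A \ B)}

/-- Vertices of `S(p,q)`: the center `c` and `a_1, …, a_p`, `b_1, …, b_q`. -/
abbrev SpqV (p q : ℕ) := Unit ⊕ (Fin p ⊕ Fin q)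

/-- Arcs of `S(p,q)`: `(a_i, c)` for `1 ≤ i ≤ p` and `(c, b_j)` for `1 ≤ j ≤ q`. -/
def spqAdj (p q : ℕ) : SpqV p q → SpqV p q → Prop := fun a b =>
  (∃ i : Fin p, a = Sum.inr (Sum.inl i) ∧ b = Sum.inl ()) ∨
  (∃ j : Fin q, a = Sum.inl () ∧ b = Sum.inr (Sum.inr j))

open Classical in
/-- The arc set of `S(p,q)`. -/
noncomputable def spqArcs (p q : ℕ) : Finset (SpqV p q × SpqV p q) :=
  Finset.univ.filter fun e => spqAdj p q e.1 e.2

section SpqAux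

private abbrev aV {p q : ℕ} (i : Fin p) : SpqV p q := Sum.inr (Sum.inl i)
private abbrev bV {p q : ℕ} (j : Fin q) : SpqV p q := Sum.inr (Sum.inr j)
private abbrev cV {p q : ℕ} : SpqV p q := Sum.inl ()

variable {p q : ℕ}

private lemma mem_spqArcs {e : SpqV p q × SpqV p q} :
    e ∈ spqArcs p q ↔ (∃ i, e.1 = aV i ∧ e.2 = cV) ∨ (∃ j, e.1 = cV ∧ e.2 = bV j) := by
  simp [spqArcs, spqAdj]

private lemma not_source_of_mem {W : Type*} [DecidableEq W] {A : Finset (W × W)} {u v : W}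
    (h : (u, v) ∈ A) : ¬ IsSource A v := by
  intro h0
  have hm : (u, v) ∈ A.filter fun e => e.2 = v := Finset.mem_filter.mpr ⟨h, rfl⟩
  rw [IsSource, inDeg, Finset.card_eq_zero] at h0
  simp [h0] at hm

private lemma not_sink_of_mem {W : Type*} [DecidableEq W] {A : Finset (W × W)} {u v : W}
    (h : (u, v) ∈ A) : ¬ IsSink A u := by
  intro h0
  have hm : (u, v) ∈ A.filter fun e => e.1 = u := Finset.mem_filter.mpr ⟨h, rfl⟩
  rw [IsSink, outDeg, Finset.card_eq_zero] at h0
  simp [h0] at hm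

private lemma source_aV {A : Finset (SpqV p q × SpqV p q)} (hA : A ⊆ spqArcs p q)
    (i : Fin p) : IsSource A (aV i) := by
  rw [IsSource, inDeg, Finset.card_eq_zero, Finset.filter_eq_empty_iff]
  intro e he
  rcases mem_spqArcs.mp (hA he) with ⟨i', _, h2⟩ | ⟨j', _, h2⟩ <;> simp [h2]

private lemma sink_bV {A : Finset (SpqV p q × SpqV p q)} (hA : A ⊆ spqArcs p q)
    (j : Fin q) : IsSink A (bV j) := by
  rw [IsSink, outDeg, Finset.card_eq_zero, Finset.filter_eq_empty_iff]
  intro e he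
  rcases mem_spqArcs.mp (hA he) with ⟨i', h1, _⟩ | ⟨j', h1, _⟩ <;> simp [h1]

private lemma arcsOf_triple {W : Type*} (x y z : W) :
    arcsOf [x, y, z] = [(x, y), (y, z)] := rfl

private lemma ssp_acb {A : Finset (SpqV p q × SpqV p q)} (hA : A ⊆ spqArcs p q)
    {i : Fin p} {j : Fin q} (hi : (aV i, cV) ∈ A) (hj : (cV, bV j) ∈ A) :
    IsSourceSinkPath A [aV i, cV, bV j] := by
  refine ⟨by simp, ?_, by simp, ⟨aV i, rfl, source_aV hA i⟩, ⟨bV j, rfl, sink_bV hA j⟩⟩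
  exact List.isChain_cons_cons.mpr ⟨hi, List.isChain_cons_cons.mpr ⟨hj, List.isChain_singleton _⟩⟩

private lemma ssp_eq {A : Finset (SpqV p q × SpqV p q)} (hA : A ⊆ spqArcs p q)
    {i0 : Fin p} {j0 : Fin q} (hi0 : (aV i0, cV) ∈ A) (hj0 : (cV, bV j0) ∈ A)
    {P : List (SpqV p q)} (hP : IsSourceSinkPath A P) :
    ∃ i j, (aV i, cV) ∈ A ∧ (cV, bV j) ∈ A ∧ P = [aV i, cV, bV j] := by
  obtain ⟨hlen, hchain, hnd, ⟨s, hs, hsrc⟩, ⟨t, ht, hsink⟩⟩ := hP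
  match P, hlen with
  | x :: y :: rest, _ =>
    have hs' : x = s := by simpa using hs
    subst hs'
    have h1 : (x, y) ∈ A := (List.isChain_cons_cons.mp hchain).1
    rcases mem_spqArcs.mp (hA h1) with ⟨i, hx, hy⟩ | ⟨j, hx, hy⟩
    · subst hx; subst hy
      match rest with
      | [] =>
        exfalso
        have ht' : cV = t := by simpa using ht
        rw [← ht'] at hsink
        exact not_sink_of_mem hj0 hsink
      | w :: rest2 =>
        have h2 : (cV, w) ∈ A := (List.isChain_cons_cons.mp (List.isChain_cons_cons.mp hchain).2).1
        rcases mem_spqArcs.mp (hA h2) with ⟨i', hx', hy'⟩ | ⟨j', hx', hy'⟩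
        · simp at hx'
        · subst hy'
          match rest2 with
          | [] => exact ⟨i, j', h1, h2, rfl⟩
          | u :: rest3 =>
            exfalso
            have h3 : (bV j', u) ∈ A :=
              (List.isChain_cons_cons.mp (List.isChain_cons_cons.mp
                (List.isChain_cons_cons.mp hchain).2).2).1
            rcases mem_spqArcs.mp (hA h3) with ⟨i', hx', _⟩ | ⟨j'', hx', _⟩ <;> simp at hx'
    · exfalso
      subst hx
      exact not_source_of_mem hi0 hsrc

end SpqAux

section SpqMain
variable {p q : ℕ}

private lemma bV_inj : Function.Injective (fun j : Fin q => ((cV, bV j) : SpqV p q × SpqV p q)) := by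
  intro j j' h
  simpa using h

private lemma aV_inj : Function.Injective (fun i : Fin p => ((aV i, cV) : SpqV p q × SpqV p q)) := by
  intro i i' h
  simpa using h

/-- Deleting all but one `b`-arc gives a funnel, so `q - 1` is achievable. -/
private lemma funnel_mem_q (hp : 1 ≤ p) (hq : 1 ≤ q) :
    ∃ B ⊆ spqArcs p q, B.card = q - 1 ∧ IsFunnel (spqArcs p q \ B) := by
  set j0 : Fin q := ⟨0, hq⟩ with hj0def
  set i0 : Fin p := ⟨0, hp⟩ with hi0def
  set B : Finset (SpqV p q × SpqV p q) :=
    (Finset.univ.erase j0).image (fun j => (cV, bV j)) with hBdef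
  have hBsub : B ⊆ spqArcs p q := by
    intro e he
    rw [hBdef, Finset.mem_image] at he
    obtain ⟨j, _, rfl⟩ := he
    exact mem_spqArcs.mpr (Or.inr ⟨j, rfl, rfl⟩)
  refine ⟨B, hBsub, ?_, ?_⟩
  · rw [hBdef, Finset.card_image_of_injective _ bV_inj,
      Finset.card_erase_of_mem (Finset.mem_univ _), Finset.card_univ]
    simp
  · set A := spqArcs p q \ B with hAdef
    have hAsub : A ⊆ spqArcs p q := Finset.sdiff_subset
    have hmem_a : ∀ i : Fin p, (aV i, cV) ∈ A := by
      intro i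
      rw [hAdef, Finset.mem_sdiff]
      refine ⟨mem_spqArcs.mpr (Or.inl ⟨i, rfl, rfl⟩), ?_⟩
      rw [hBdef, Finset.mem_image]
      rintro ⟨j, _, h⟩
      simp at h
    have hmem_b : ∀ j : Fin q, (cV, bV j) ∈ A → j = j0 := by
      intro j hj
      rw [hAdef, Finset.mem_sdiff, hBdef, Finset.mem_image] at hj
      by_contra hne
      exact hj.2 ⟨j, Finset.mem_erase.mpr ⟨hne, Finset.mem_univ _⟩, rfl⟩
    have hb0 : (cV, bV j0) ∈ A := by
      rw [hAdef, Finset.mem_sdiff]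
      refine ⟨mem_spqArcs.mpr (Or.inr ⟨j0, rfl, rfl⟩), ?_⟩
      rw [hBdef, Finset.mem_image]
      rintro ⟨j, hj, h⟩
      have : j = j0 := by simpa using h
      subst this
      simp at hj
    intro P hP
    obtain ⟨i, j, hiA, hjA, rfl⟩ := ssp_eq hAsub (hmem_a i0) hb0 hP
    have hj : j = j0 := hmem_b j hjA
    subst hj
    refine ⟨(aV i, cV), by simp [arcsOf_triple], ?_⟩
    refine ⟨[aV i, cV, bV j0], ⟨ssp_acb hAsub hiA hb0, by simp [arcsOf_triple]⟩, ?_⟩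
    rintro P' ⟨hP', he'⟩
    obtain ⟨i', j', hiA', hjA', rfl⟩ := ssp_eq hAsub (hmem_a i0) hb0 hP'
    have hj' : j' = j0 := hmem_b j' hjA'
    subst hj'
    rw [arcsOf_triple] at he'
    have : i' = i := by
      rcases List.mem_pair.mp he' with h | h <;> simp_all
    subst this
    rfl

/-- Deleting all but one `a`-arc gives a funnel, so `p - 1` is achievable. -/
private lemma funnel_mem_p (hp : 1 ≤ p) (hq : 1 ≤ q) :
    ∃ B ⊆ spqArcs p q, B.card = p - 1 ∧ IsFunnel (spqArcs p q \ B) := by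
  set j0 : Fin q := ⟨0, hq⟩ with hj0def
  set i0 : Fin p := ⟨0, hp⟩ with hi0def
  set B : Finset (SpqV p q × SpqV p q) :=
    (Finset.univ.erase i0).image (fun i => (aV i, cV)) with hBdef
  have hBsub : B ⊆ spqArcs p q := by
    intro e he
    rw [hBdef, Finset.mem_image] at he
    obtain ⟨i, _, rfl⟩ := he
    exact mem_spqArcs.mpr (Or.inl ⟨i, rfl, rfl⟩)
  refine ⟨B, hBsub, ?_, ?_⟩
  · rw [hBdef, Finset.card_image_of_injective _ aV_inj,
      Finset.card_erase_of_mem (Finset.mem_univ _), Finset.card_univ]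
    simp
  · set A := spqArcs p q \ B with hAdef
    have hAsub : A ⊆ spqArcs p q := Finset.sdiff_subset
    have hmem_b : ∀ j : Fin q, (cV, bV j) ∈ A := by
      intro j
      rw [hAdef, Finset.mem_sdiff]
      refine ⟨mem_spqArcs.mpr (Or.inr ⟨j, rfl, rfl⟩), ?_⟩
      rw [hBdef, Finset.mem_image]
      rintro ⟨i, _, h⟩
      simp at h
    have hmem_a : ∀ i : Fin p, (aV i, cV) ∈ A → i = i0 := by
      intro i hi
      rw [hAdef, Finset.mem_sdiff, hBdef, Finset.mem_image] at hi
      by_contra hne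
      exact hi.2 ⟨i, Finset.mem_erase.mpr ⟨hne, Finset.mem_univ _⟩, rfl⟩
    have ha0 : (aV i0, cV) ∈ A := by
      rw [hAdef, Finset.mem_sdiff]
      refine ⟨mem_spqArcs.mpr (Or.inl ⟨i0, rfl, rfl⟩), ?_⟩
      rw [hBdef, Finset.mem_image]
      rintro ⟨i, hi, h⟩
      have : i = i0 := by simpa using h
      subst this
      simp at hi
    intro P hP
    obtain ⟨i, j, hiA, hjA, rfl⟩ := ssp_eq hAsub ha0 (hmem_b j0) hP
    have hi : i = i0 := hmem_a i hiA
    subst hi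
    refine ⟨(cV, bV j), by simp [arcsOf_triple], ?_⟩
    refine ⟨[aV i0, cV, bV j], ⟨ssp_acb hAsub ha0 hjA, by simp [arcsOf_triple]⟩, ?_⟩
    rintro P' ⟨hP', he'⟩
    obtain ⟨i', j', hiA', hjA', rfl⟩ := ssp_eq hAsub ha0 (hmem_b j0) hP'
    have hi' : i' = i0 := hmem_a i' hiA'
    subst hi'
    rw [arcsOf_triple] at he'
    have : j' = j := by
      rcases List.mem_pair.mp he' with h | h <;> simp_all
    subst this
    rfl

private lemma two_survivors {W : Type*} [Fintype W] [DecidableEq W]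
    (f : W → SpqV p q × SpqV p q) (hf : Function.Injective f)
    {B : Finset (SpqV p q × SpqV p q)} (hcard : B.card + 2 ≤ Fintype.card W) :
    ∃ x y : W, x ≠ y ∧ f x ∉ B ∧ f y ∉ B := by
  set D : Finset W := Finset.univ.filter (fun x => f x ∈ B) with hD
  have hDle : D.card ≤ B.card := by
    apply Finset.card_le_card_of_injOn f
    · intro x hx
      rw [Finset.mem_coe, Finset.mem_filter] at hx
      exact hx.2
    · exact fun a _ b _ h => hf h
  have h2 : 1 < (Finset.univ \ D).card := by
    rw [Finset.card_sdiff_of_subset (Finset.subset_univ _), Finset.card_univ]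
    omega
  obtain ⟨x, hx, y, hy, hxy⟩ := Finset.one_lt_card.mp h2
  rw [Finset.mem_sdiff, hD, Finset.mem_filter] at hx hy
  refine ⟨x, y, hxy, fun h => hx.2 ⟨Finset.mem_univ _, h⟩,
    fun h => hy.2 ⟨Finset.mem_univ _, h⟩⟩

private lemma funnel_lower (hp : 2 ≤ p) (hq : 2 ≤ q)
    {B : Finset (SpqV p q × SpqV p q)} (hB : B ⊆ spqArcs p q)
    (hf : IsFunnel (spqArcs p q \ B)) : min p q - 1 ≤ B.card := by
  by_contra h
  push_neg at h
  have hmin : 2 ≤ min p q := le_min hp hq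
  have hcp : B.card + 2 ≤ p := by omega
  have hcq : B.card + 2 ≤ q := by omega
  obtain ⟨i1, i2, hi12, hi1, hi2⟩ := two_survivors (p := p) (q := q)
    (fun i : Fin p => (aV i, cV)) aV_inj (by simpa using hcp)
  obtain ⟨j1, j2, hj12, hj1, hj2⟩ := two_survivors (p := p) (q := q)
    (fun j : Fin q => (cV, bV j)) bV_inj (by simpa using hcq)
  set A := spqArcs p q \ B with hAdef
  have hAsub : A ⊆ spqArcs p q := Finset.sdiff_subset
  have hA1 : (aV i1, cV) ∈ A :=
    Finset.mem_sdiff.mpr ⟨mem_spqArcs.mpr (Or.inl ⟨i1, rfl, rfl⟩), hi1⟩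
  have hA2 : (aV i2, cV) ∈ A :=
    Finset.mem_sdiff.mpr ⟨mem_spqArcs.mpr (Or.inl ⟨i2, rfl, rfl⟩), hi2⟩
  have hB1 : (cV, bV j1) ∈ A :=
    Finset.mem_sdiff.mpr ⟨mem_spqArcs.mpr (Or.inr ⟨j1, rfl, rfl⟩), hj1⟩
  have hB2 : (cV, bV j2) ∈ A :=
    Finset.mem_sdiff.mpr ⟨mem_spqArcs.mpr (Or.inr ⟨j2, rfl, rfl⟩), hj2⟩
  obtain ⟨e, he, P0, _, hu⟩ := hf [aV i1, cV, bV j1] (ssp_acb hAsub hA1 hB1)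
  rw [arcsOf_triple] at he
  rcases List.mem_pair.mp he with rfl | rfl
  · have hq1 := hu [aV i1, cV, bV j1]
      ⟨ssp_acb hAsub hA1 hB1, by simp [arcsOf_triple]⟩
    have hq2 := hu [aV i1, cV, bV j2]
      ⟨ssp_acb hAsub hA1 hB2, by simp [arcsOf_triple]⟩
    rw [← hq2] at hq1
    simp at hq1
    exact hj12 hq1
  · have hq1 := hu [aV i1, cV, bV j1]
      ⟨ssp_acb hAsub hA1 hB1, by simp [arcsOf_triple]⟩
    have hq2 := hu [aV i2, cV, bV j1]
      ⟨ssp_acb hAsub hA2 hB1, by simp [arcsOf_triple]⟩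
    rw [← hq2] at hq1
    simp at hq1
    exact hi12 hq1

end SpqMain

/-- For `p, q ≥ 2`, the arc-deletion distance to a funnel of
`S(p,q)` equals `min(p,q) - 1`. -/
theorem spq_funnelDist (p q : ℕ) (hp : 2 ≤ p) (hq : 2 ≤ q) :
    funnelDist (spqArcs p q) = min p q - 1 := by
  have hp1 : 1 ≤ p := by omega
  have hq1 : 1 ≤ q := by omega
  rw [funnelDist]
  apply le_antisymm
  · rcases le_total p q with hle | hle
    · obtain ⟨B, hBsub, hcard, hf⟩ := funnel_mem_p (p := p) (q := q) hp1 hq1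
      have heq : min p q - 1 = p - 1 := by omega
      rw [heq]
      exact Nat.sInf_le ⟨B, hBsub, hcard, hf⟩
    · obtain ⟨B, hBsub, hcard, hf⟩ := funnel_mem_q (p := p) (q := q) hp1 hq1
      have heq : min p q - 1 = q - 1 := by omega
      rw [heq]
      exact Nat.sInf_le ⟨B, hBsub, hcard, hf⟩
  · obtain ⟨B, hBsub, hcard, hf⟩ := funnel_mem_p (p := p) (q := q) hp1 hq1
    have hne : {k | ∃ B ⊆ spqArcs p q, B.card = k ∧ IsFunnel (spqArcs p q \ B)}.Nonempty :=
      ⟨p - 1, B, hBsub, hcard, hf⟩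
    apply le_csInf hne
    rintro k ⟨B', hB', rfl, hf'⟩
    exact funnel_lower hp hq hB' hf'
end

section
/- Let D be a DAG containing a vertex u with indegree at least 2 and a vertex w reachable from u by a directed path (possibly w = u) with outdegree at least 2. Then every source-sink path of D that passes through both u and w contains no private arc; in fact, every arc of such a path lies on at least two distinct source-sink paths of D. -/
variable {V : Type*} [Fintype V] [DecidableEq V]

lemma mem_arcsOf {p : List V} {x y : V} :
    (x, y) ∈ arcsOf p ↔ ∃ i, p[i]? = some x ∧ p[i+1]? = some y := by
  induction p with
  | nil => simp [arcsOf]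
  | cons a t ih =>
    cases t with
    | nil => simp [arcsOf]
    | cons b t' =>
      constructor
      · intro h
        rcases (by simpa [arcsOf] using h : (x,y) = (a,b) ∨ (x,y) ∈ arcsOf (b :: t')) with h | h
        · exact ⟨0, by simp [Prod.ext_iff] at h; simp [h.1, h.2]⟩
        · obtain ⟨i, h1, h2⟩ := ih.mp h
          exact ⟨i + 1, by simpa using h1, by simpa using h2⟩
      · rintro ⟨i, h1, h2⟩
        cases i with
        | zero =>
          simp at h1 h2
          simp [arcsOf, h1, h2]
        | succ i =>
          simp at h1 h2
          have := ih.mpr ⟨i, h1, by simpa using h2⟩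
          simp [arcsOf] at this ⊢
          tauto

lemma chain'_transGen {r : V → V → Prop} {p : List V} (h : List.Chain' r p) {i j : ℕ} {x y : V}
    (hij : i < j) (hx : p[i]? = some x) (hy : p[j]? = some y) : Relation.TransGen r x y := by
  induction j generalizing y with
  | zero => omega
  | succ j ih =>
    have hjlen : j + 1 < p.length := (List.getElem?_eq_some_iff.mp hy).1
    obtain ⟨z, hz⟩ : ∃ z, p[j]? = some z := ⟨p[j], List.getElem?_eq_some_iff.mpr ⟨by omega, rfl⟩⟩
    have hstep : r z y := by
      have := List.isChain_iff_getElem.mp h j (by omega)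
      have hz' : p[j] = z := by
        have := List.getElem?_eq_some_iff.mp hz; exact this.2
      have hy' : p[j+1] = y := by
        have := List.getElem?_eq_some_iff.mp hy; exact this.2
      rwa [hz', hy'] at this
    rcases Nat.lt_or_ge i j with h' | h'
    · exact (ih h' hz).tail hstep
    · have : i = j := by omega
      subst this
      have : x = z := by rw [hx] at hz; exact Option.some.inj hz
      subst this
      exact Relation.TransGen.single hstep

lemma nodup_of_chain' {A : Finset (V × V)} (hdag : IsDAG A) {p : List V}
    (h : List.Chain' (ArcAdj A) p) : p.Nodup := by
  rw [List.nodup_iff_injective_get]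
  rintro ⟨i, hi⟩ ⟨j, hj⟩ hij
  simp only [List.get_eq_getElem] at hij
  by_contra hne
  have hne' : i ≠ j := by simpa using hne
  rcases Nat.lt_or_ge i j with h' | h'
  · exact hdag p[i] (chain'_transGen h h' (by simp [List.getElem?_eq_some_iff, hi])
      (by simp [List.getElem?_eq_some_iff, hj, hij]))
  · have h'' : j < i := by omega
    exact hdag p[j] (chain'_transGen h h'' (by simp [List.getElem?_eq_some_iff, hj])
      (by simp [List.getElem?_eq_some_iff, hi, hij]))

lemma exists_source_path (A : Finset (V × V)) (hdag : IsDAG A) (v : V) :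
    ∃ q s, List.Chain' (ArcAdj A) (q ++ [v]) ∧ (q ++ [v]).head? = some s ∧ IsSource A s := by
  haveI : IsTrans V (Relation.TransGen (ArcAdj A)) := ⟨fun _ _ _ => Relation.TransGen.trans⟩
  haveI : IsIrrefl V (Relation.TransGen (ArcAdj A)) := ⟨hdag⟩
  induction v using (Finite.wellFounded_of_trans_of_irrefl (Relation.TransGen (ArcAdj A))).induction with
  | _ v ih =>
    by_cases hv : IsSource A v
    · exact ⟨[], v, List.isChain_singleton v, by simp, hv⟩
    · have : (A.filter fun e => e.2 = v).Nonempty := by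
        rw [Finset.nonempty_iff_ne_empty]
        intro hc
        exact hv (by simp [IsSource, inDeg, hc])
      obtain ⟨e, he⟩ := this
      simp only [Finset.mem_filter] at he
      have harc : ArcAdj A e.1 v := by
        have : e = (e.1, v) := by rw [← he.2]
        rw [ArcAdj, ← this]; exact he.1
      obtain ⟨q, s, hc, hh, hs⟩ := ih e.1 (Relation.TransGen.single harc)
      refine ⟨q ++ [e.1], s, ?_, ?_, hs⟩
      · refine hc.append (List.isChain_singleton v) ?_
        intro x hx y hy
        simp [List.getLast?_concat] at hx
        simp at hy
        rw [← hx, ← hy]; exact harc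
      · simp only [List.head?_append] at hh ⊢
        rcases Option.or_eq_some_iff.mp hh with h | ⟨h1, h2⟩
        · simp [h]
        · simp at h2
          simp [h1, h2]

lemma exists_sink_path (A : Finset (V × V)) (hdag : IsDAG A) (v : V) :
    ∃ q t, List.Chain' (ArcAdj A) (v :: q) ∧ (v :: q).getLast? = some t ∧ IsSink A t := by
  haveI : IsTrans V (Function.swap (Relation.TransGen (ArcAdj A))) :=
    ⟨fun _ _ _ hab hbc => hbc.trans hab⟩
  haveI : IsIrrefl V (Function.swap (Relation.TransGen (ArcAdj A))) := ⟨hdag⟩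
  induction v using (Finite.wellFounded_of_trans_of_irrefl
      (Function.swap (Relation.TransGen (ArcAdj A)))).induction with
  | _ v ih =>
    by_cases hv : IsSink A v
    · exact ⟨[], v, List.isChain_singleton v, by simp, hv⟩
    · have : (A.filter fun e => e.1 = v).Nonempty := by
        rw [Finset.nonempty_iff_ne_empty]
        intro hc
        exact hv (by simp [IsSink, outDeg, hc])
      obtain ⟨e, he⟩ := this
      simp only [Finset.mem_filter] at he
      have harc : ArcAdj A v e.2 := by
        have : e = (v, e.2) := by rw [← he.2]
        rw [ArcAdj, ← this]; exact he.1
      obtain ⟨q, t, hc, hl, ht⟩ := ih e.2 (Relation.TransGen.single harc)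
      exact ⟨e.2 :: q, t, List.isChain_cons_cons.mpr ⟨harc, hc⟩, by rw [List.getLast?_cons_cons]; exact hl, ht⟩

lemma getLast?_drop_of_lt {l : List V} {n : ℕ} (h : n < l.length) :
    (l.drop n).getLast? = l.getLast? := by
  conv_rhs => rw [← List.take_append_drop n l]
  rw [List.getLast?_append]
  have hne : l.drop n ≠ [] := by
    intro hc; rw [List.drop_eq_nil_iff] at hc; omega
  obtain ⟨z, hz⟩ := Option.isSome_iff_exists.mp (List.getLast?_isSome.mpr hne)
  simp [hz]

lemma getLast?_take_succ {l : List V} {n : ℕ} (h : n < l.length) :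
    (l.take (n + 1)).getLast? = l[n]? := by
  rw [List.getLast?_eq_getElem?]
  have hlen : (l.take (n + 1)).length = n + 1 := by simp; omega
  rw [hlen]
  simp only [Nat.add_sub_cancel]
  rw [List.getElem?_take]
  simp

lemma head?_take_succ (l : List V) (n : ℕ) : (l.take (n + 1)).head? = l.head? := by
  cases l <;> simp


/-- If a DAG has a vertex `u` of indegree ≥ 2 and a vertex `w`
reachable from `u` (possibly `w = u`) of outdegree ≥ 2, then every source-sink
path through both `u` and `w` contains no private arc; indeed each of its arcs
lies on at least two distinct source-sink paths. -/
theorem path_through_forbidden_pair_all_arcs_shared (A : Finset (V × V))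
    (hdag : IsDAG A) (u w : V) (hu : 2 ≤ inDeg A u)
    (hreach : Relation.ReflTransGen (ArcAdj A) u w) (hw : 2 ≤ outDeg A w)
    (p : List V) (hp : IsSourceSinkPath A p) (hup : u ∈ p) (hwp : w ∈ p) :
    ∀ e ∈ arcsOf p, ¬ IsPrivate A e ∧
      ∃ p₁ p₂ : List V, p₁ ≠ p₂ ∧
        (IsSourceSinkPath A p₁ ∧ e ∈ arcsOf p₁) ∧
        (IsSourceSinkPath A p₂ ∧ e ∈ arcsOf p₂) := by
  obtain ⟨hlen, hchain, hnodup, ⟨s, hs, hsrc⟩, ⟨t, ht, hsink⟩⟩ := hp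
  obtain ⟨iu, hiu⟩ : ∃ i, p[i]? = some u := List.mem_iff_getElem?.mp hup
  obtain ⟨iw, hiw⟩ : ∃ i, p[i]? = some w := List.mem_iff_getElem?.mp hwp
  have hiulen : iu < p.length := (List.getElem?_eq_some_iff.mp hiu).1
  have hiwlen : iw < p.length := (List.getElem?_eq_some_iff.mp hiw).1
  have hiuw : iu ≤ iw := by
    by_contra h
    push_neg at h
    exact hdag u (Relation.TransGen.trans_right hreach (chain'_transGen hchain h hiw hiu))
  -- u is not the first vertex
  have hiu0 : 1 ≤ iu := by
    by_contra h
    push_neg at h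
    interval_cases iu
    rw [← List.head?_eq_getElem?, hs] at hiu
    have : s = u := Option.some.inj hiu
    subst this
    rw [IsSource] at hsrc
    omega
  -- w is not the last vertex
  have hiw1 : iw + 1 < p.length := by
    by_contra h
    push_neg at h
    have hiweq : iw = p.length - 1 := by omega
    rw [List.getLast?_eq_getElem?, ← hiweq, hiw] at ht
    have : w = t := Option.some.inj ht
    subst this
    rw [IsSink] at hsink
    omega
  -- predecessor of u on p and successor of w on p
  obtain ⟨c, hc⟩ : ∃ c, p[iu - 1]? = some c :=
    ⟨p[iu - 1]'(by omega), List.getElem?_eq_some_iff.mpr ⟨by omega, rfl⟩⟩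
  obtain ⟨d, hd⟩ : ∃ d, p[iw + 1]? = some d :=
    ⟨p[iw + 1]'(by omega), List.getElem?_eq_some_iff.mpr ⟨by omega, rfl⟩⟩
  have harc_wd : ArcAdj A w d := by
    have h1 := List.isChain_iff_getElem.mp hchain iw (by omega)
    have e1 : p[iw]'(by omega) = w := (List.getElem?_eq_some_iff.mp hiw).2
    have e2 : p[iw + 1]'(by omega) = d := (List.getElem?_eq_some_iff.mp hd).2
    rwa [e1, e2] at h1
  -- alternative in-neighbor of u
  obtain ⟨a, haA, hane⟩ : ∃ a, (a, u) ∈ A ∧ a ≠ c := by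
    by_contra h
    push_neg at h
    have hsub : A.filter (fun e => e.2 = u) ⊆ {(c, u)} := by
      intro e he
      simp only [Finset.mem_filter] at he
      have he1 : e = (e.1, u) := by rw [← he.2]
      have := h e.1 (by rw [← he1]; exact he.1)
      rw [Finset.mem_singleton, he1, this]
    have := Finset.card_le_card hsub
    rw [Finset.card_singleton] at this
    rw [inDeg] at hu
    omega
  -- alternative out-neighbor of w
  obtain ⟨b, hbA, hbne⟩ : ∃ b, (w, b) ∈ A ∧ b ≠ d := by
    by_contra h
    push_neg at h
    have hsub : A.filter (fun e => e.1 = w) ⊆ {(w, d)} := by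
      intro e he
      simp only [Finset.mem_filter] at he
      have he1 : e = (w, e.2) := by rw [← he.2]
      have := h e.2 (by rw [← he1]; exact he.1)
      rw [Finset.mem_singleton, he1, this]
    have := Finset.card_le_card hsub
    rw [Finset.card_singleton] at this
    rw [outDeg] at hw
    omega
  rintro ⟨x, y⟩ he
  obtain ⟨i, hx, hy⟩ := mem_arcsOf.mp he
  have main : ∃ p₂, p₂ ≠ p ∧ IsSourceSinkPath A p₂ ∧ (x, y) ∈ arcsOf p₂ := by
    rcases Nat.lt_or_ge i iw with hcase | hcase
    · -- prefix case: replace the tail after w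
      obtain ⟨q, t₂, hqc, hql, hqt⟩ := exists_sink_path A hdag b
      refine ⟨p.take (iw + 1) ++ (b :: q), ?_, ⟨?_, ?_, ?_, ?_, ?_⟩, ?_⟩
      · -- p₂ ≠ p : (w, b) ∈ arcsOf p₂ but not in arcsOf p
        intro hcontra
        have hmem : (w, b) ∈ arcsOf (p.take (iw + 1) ++ (b :: q)) := by
          rw [mem_arcsOf]
          refine ⟨iw, ?_, ?_⟩
          · rw [List.getElem?_append, if_pos (by simp; omega), List.getElem?_take,
              if_pos (by omega)]
            exact hiw
          · rw [List.getElem?_append, if_neg (by simp)]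
            have : iw + 1 - (p.take (iw + 1)).length = 0 := by simp; omega
            rw [this]
            simp
        rw [hcontra, mem_arcsOf] at hmem
        obtain ⟨k, hk1, hk2⟩ := hmem
        have hkw : k = iw :=
          (List.getElem?_inj (List.getElem?_eq_some_iff.mp hk1).1 hnodup).mp (hk1.trans hiw.symm)
        rw [hkw, hd] at hk2
        exact hbne (Option.some.inj hk2).symm
      · -- length
        simp
        omega
      · -- chain
        refine (hchain.take (iw + 1)).append hqc ?_
        intro x' hx' y' hy'
        rw [getLast?_take_succ (by omega), hiw] at hx'
        simp only [List.head?_cons] at hy'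
        rw [← Option.some.inj hx', ← Option.some.inj hy']
        exact hbA
      · -- nodup
        exact nodup_of_chain' hdag ((hchain.take (iw + 1)).append hqc (by
          intro x' hx' y' hy'
          rw [getLast?_take_succ (by omega), hiw] at hx'
          simp only [List.head?_cons] at hy'
          rw [← Option.some.inj hx', ← Option.some.inj hy']
          exact hbA))
      · -- source
        refine ⟨s, ?_, hsrc⟩
        rw [List.head?_append, head?_take_succ, hs]
        rfl
      · -- sink
        refine ⟨t₂, ?_, hqt⟩
        rw [List.getLast?_append]
        obtain ⟨z, hz⟩ := Option.isSome_iff_exists.mp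
          (List.getLast?_isSome.mpr (List.cons_ne_nil b q))
        rw [hz] at hql ⊢
        rw [hql]
        rfl
      · -- arc membership
        rw [mem_arcsOf]
        refine ⟨i, ?_, ?_⟩
        · rw [List.getElem?_append, if_pos (by simp; omega), List.getElem?_take,
            if_pos (by omega)]
          exact hx
        · rw [List.getElem?_append, if_pos (by simp; omega), List.getElem?_take,
            if_pos (by omega)]
          exact hy
    · -- suffix case: iu ≤ i, replace the part before u
      have hcase' : iu ≤ i := le_trans hiuw hcase
      obtain ⟨q, s₂, hqc, hqh, hqs⟩ := exists_source_path A hdag a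
      have hlink : ∀ x' ∈ (q ++ [a]).getLast?, ∀ y' ∈ (p.drop iu).head?, ArcAdj A x' y' := by
        intro x' hx' y' hy'
        rw [List.getLast?_concat] at hx'
        rw [List.head?_drop, hiu] at hy'
        rw [← Option.some.inj hx', ← Option.some.inj hy']
        exact haA
      refine ⟨(q ++ [a]) ++ p.drop iu, ?_, ⟨?_, ?_, ?_, ?_, ?_⟩, ?_⟩
      · -- p₂ ≠ p : (a, u) ∈ arcsOf p₂ but not in arcsOf p
        intro hcontra
        have hmem : (a, u) ∈ arcsOf ((q ++ [a]) ++ p.drop iu) := by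
          rw [mem_arcsOf]
          refine ⟨q.length, ?_, ?_⟩
          · rw [List.getElem?_append, if_pos (by simp)]
            simp
          · rw [List.getElem?_append, if_neg (by simp)]
            have : q.length + 1 - (q ++ [a]).length = 0 := by simp
            rw [this, List.getElem?_drop]
            simpa using hiu
        rw [hcontra, mem_arcsOf] at hmem
        obtain ⟨k, hk1, hk2⟩ := hmem
        have hku : k + 1 = iu :=
          (List.getElem?_inj (List.getElem?_eq_some_iff.mp hk2).1 hnodup).mp (hk2.trans hiu.symm)
        have : k = iu - 1 := by omega
        rw [this, hc] at hk1
        exact hane (Option.some.inj hk1).symm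
      · -- length
        simp
        omega
      · -- chain
        exact hqc.append (hchain.drop iu) hlink
      · -- nodup
        exact nodup_of_chain' hdag (hqc.append (hchain.drop iu) hlink)
      · -- source
        refine ⟨s₂, ?_, hqs⟩
        rw [List.head?_append, hqh]
        rfl
      · -- sink
        refine ⟨t, ?_, hsink⟩
        rw [List.getLast?_append, getLast?_drop_of_lt (by omega), ht]
        rfl
      · -- arc membership
        rw [mem_arcsOf]
        refine ⟨(q ++ [a]).length + (i - iu), ?_, ?_⟩
        · rw [List.getElem?_append, if_neg (by omega), Nat.add_sub_cancel_left,
            List.getElem?_drop]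
          have : iu + (i - iu) = i := by omega
          rw [this]
          exact hx
        · rw [List.getElem?_append, if_neg (by omega)]
          have h1 : (q ++ [a]).length + (i - iu) + 1 - (q ++ [a]).length = i - iu + 1 := by omega
          rw [h1, List.getElem?_drop]
          have : iu + (i - iu + 1) = i + 1 := by omega
          rw [this]
          exact hy
  obtain ⟨p₂, hne, hssp₂, hmem₂⟩ := main
  have hpssp : IsSourceSinkPath A p := ⟨hlen, hchain, hnodup, ⟨s, hs, hsrc⟩, ⟨t, ht, hsink⟩⟩
  constructor
  · rintro ⟨r, _, huniq⟩
    have h1 := huniq p ⟨hpssp, he⟩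
    have h2 := huniq p₂ ⟨hssp₂, hmem₂⟩
    exact hne (h2.trans h1.symm)
  · exact ⟨p₂, p, hne, ⟨hssp₂, hmem₂⟩, ⟨hpssp, he⟩⟩
end
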